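/- Let R be a field, let G be the cyclic group of order n generated by g with listing 1, g, g², …, g^{n−1}, and let u ∈ RG. Suppose r is such that the family u, gu, g²u, …, g^{r−1}u is R-linearly independent while u, gu, g²u, …, g^r u is R-linearly dependent. Then rank σ(u) = r; equivalently, the R-span of {g^i u : 0 ≤ i ≤ n−1} has dimension r. -/

import Mathlib

/-- The `RG`-matrix of an element `w` of the group ring `RG`, relative to a
listing `g : Fin n ≃ G` of the elements of `G`. -/
noncomputable def rgMatrix {R : Type*} [Semiring R] {G : Type*} [Group G] {n : ℕ}
    (g : Fin n ≃ G) (w : MonoidAlgebra R G) : Matrix (Fin n) (Fin n) R :=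
  Matrix.of fun i j => w.coeff ((g i)⁻¹ * g j)

/-- let `G` be cyclic of order `n` generated by `g0` with listing
`1, g0, …, g0^(n-1)`, and `u ∈ RG`. If `u, g0 u, …, g0^(r-1) u` is linearly
independent while `u, g0 u, …, g0^r u` is linearly dependent, then `rank σ(u) = r`;
equivalently, the span of `{g0^i u : 0 ≤ i ≤ n - 1}` has dimension `r`. -/
theorem stmt18 {R : Type*} [Field R] {G : Type*} [Group G] {n r : ℕ}
    (g0 : G) (e : Fin n ≃ G) (he : ∀ i : Fin n, e i = g0 ^ (i : ℕ))
    (u : MonoidAlgebra R G)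
    (h_indep : LinearIndependent R
      fun i : Fin r => MonoidAlgebra.of R G (g0 ^ (i : ℕ)) * u)
    (h_dep : ¬ LinearIndependent R
      fun i : Fin (r + 1) => MonoidAlgebra.of R G (g0 ^ (i : ℕ)) * u) :
    (rgMatrix e u).rank = r ∧
    Module.finrank R (Submodule.span R
      (Set.range fun i : Fin n => MonoidAlgebra.of R G (g0 ^ (i : ℕ)) * u)) = r := by
  classical
  have hn0 : 0 < n := (e.symm 1).pos
  have hcard : Nat.card G = n := by
    rw [Nat.card_congr e.symm, Nat.card_eq_fintype_card, Fintype.card_fin]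
  have hn : g0 ^ n = 1 := by rw [← hcard]; exact pow_card_eq_one'
  set W : Submodule R (MonoidAlgebra R G) :=
    Submodule.span R (Set.range fun i : Fin r => MonoidAlgebra.of R G (g0 ^ (i : ℕ)) * u)
    with hW
  -- the (r+1)-st vector lies in the span of the first r
  have hr : MonoidAlgebra.of R G (g0 ^ r) * u ∈ W := by
    have hsnoc : (fun i : Fin (r + 1) => MonoidAlgebra.of R G (g0 ^ (i : ℕ)) * u)
        = Fin.snoc (fun i : Fin r => MonoidAlgebra.of R G (g0 ^ (i : ℕ)) * u)
            (MonoidAlgebra.of R G (g0 ^ r) * u) := by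
      funext i
      refine Fin.lastCases ?_ ?_ i
      · simp
      · intro j; simp
    rw [hsnoc, linearIndependent_fin_snoc] at h_dep
    push_neg at h_dep
    exact h_dep h_indep
  -- all translates lie in W
  have key : ∀ k : ℕ, MonoidAlgebra.of R G (g0 ^ k) * u ∈ W := by
    intro k
    induction k using Nat.strong_induction_on with
    | _ k ih =>
      by_cases hk : k < r
      · exact Submodule.subset_span ⟨⟨k, hk⟩, rfl⟩
      · push_neg at hk
        have hkk : MonoidAlgebra.of R G (g0 ^ k) * u
            = (LinearMap.mulLeft R (MonoidAlgebra.of R G (g0 ^ (k - r))))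
                (MonoidAlgebra.of R G (g0 ^ r) * u) := by
          simp only [LinearMap.mulLeft_apply, ← mul_assoc, ← map_mul, ← pow_add,
            Nat.sub_add_cancel hk]
        have hle : W.map (LinearMap.mulLeft R (MonoidAlgebra.of R G (g0 ^ (k - r)))) ≤ W := by
          rw [hW, Submodule.map_span, ← Set.range_comp]
          refine Submodule.span_le.mpr ?_
          rintro x ⟨i, rfl⟩
          have hi : k - r + (i : ℕ) < k := by have := i.isLt; omega
          have hx : (LinearMap.mulLeft R (MonoidAlgebra.of R G (g0 ^ (k - r))) ∘
              fun i : Fin r => MonoidAlgebra.of R G (g0 ^ (i : ℕ)) * u) i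
              = MonoidAlgebra.of R G (g0 ^ (k - r + (i : ℕ))) * u := by
            simp only [Function.comp_apply, LinearMap.mulLeft_apply, ← mul_assoc, ← map_mul,
              ← pow_add]
          rw [hx]
          exact ih _ hi
        rw [hkk]
        exact hle (Submodule.mem_map_of_mem hr)
  -- the full span equals W
  have hspan : Submodule.span R
      (Set.range fun i : Fin n => MonoidAlgebra.of R G (g0 ^ (i : ℕ)) * u) = W := by
    apply le_antisymm
    · refine Submodule.span_le.mpr ?_
      rintro x ⟨i, rfl⟩
      exact key i
    · rw [hW]
      refine Submodule.span_le.mpr ?_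
      rintro x ⟨i, rfl⟩
      have hpow : g0 ^ (i : ℕ) = g0 ^ ((i : ℕ) % n) := by
        conv_lhs => rw [← Nat.mod_add_div (i : ℕ) n]
        rw [pow_add, pow_mul, hn, one_pow, mul_one]
      exact Submodule.subset_span ⟨⟨(i : ℕ) % n, Nat.mod_lt _ hn0⟩, by
        simp only []
        rw [← hpow]⟩
  have hfr : Module.finrank R W = r := by
    rw [hW]
    simpa using finrank_span_eq_card h_indep
  refine ⟨?_, by rw [hspan]; exact hfr⟩
  -- matrix rank
  let Φ : MonoidAlgebra R G ≃ₗ[R] (Fin n → R) :=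
    (MonoidAlgebra.coeffLinearEquiv R).trans <| (Finsupp.domLCongr e.symm).trans (Finsupp.linearEquivFunOnFinite R R (Fin n))
  have hrow : rgMatrix e u = Matrix.of fun i : Fin n => Φ (MonoidAlgebra.of R G (g0 ^ (i : ℕ)) * u) := by
    funext i j
    show u.coeff ((e i)⁻¹ * e j) = (MonoidAlgebra.of R G (g0 ^ (i : ℕ)) * u).coeff (e j)
    rw [he i, MonoidAlgebra.of_apply, MonoidAlgebra.coeff_single_mul_apply, one_mul]
  rw [Matrix.rank_eq_finrank_span_row, hrow]
  have hrange : Set.range (Matrix.of fun i : Fin n => Φ (MonoidAlgebra.of R G (g0 ^ (i : ℕ)) * u)).row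
      = Φ '' (Set.range fun i : Fin n => MonoidAlgebra.of R G (g0 ^ (i : ℕ)) * u) := by
    rw [← Set.range_comp]; rfl
  rw [hrange, ← LinearEquiv.coe_coe, ← Submodule.map_span]
  exact (LinearEquiv.finrank_map_eq Φ _).trans (by rw [hspan]; exact hfr)
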